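/- Let (σ_v)_{v ∈ L_o^{edge}} be a portrait between the edge-path languages of two cubically labeled CAT(0) cube complexes satisfying conditions comm, par, inv, and end (but not necessarily tree). If v, w ∈ L_o^{edge} differ by a single cancellation-move v = u₁ s s⁻¹ u₂, w = u₁ u₂, then σ(v) and σ(w) differ by a single cancellation-move; if v and w differ by a single commutation-move v = u₁ s t u₂, w = u₁ t s u₂ with [s,t]=1, then σ(v) and σ(w) differ by a single commutation-move. Consequently v and w are related by a finite sequence of these moves if and only if σ(v) and σ(w) are. -/

import Mathlib

/-- A locally finite CAT(0) cube complex equipped with a cubical edge-labeling,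
encoded combinatorially: `V` are the vertices, `S` the (finite) label set with its
fixed-point-free involution `inv` (edge reversal), and `δ v s` is the endpoint of
the outgoing edge at `v` labeled `s` (if it exists).  Injectivity of the labeling
on outgoing edges is built in by determinism of `δ`.  `rev` encodes property (4)
(the reversed edge carries the inverse label), `edge_unique` says there is at most
one edge between two vertices, and `sq_det` encodes property (3): whether two
outgoing edges span a square depends only on their labels. -/
structure CC where
  V : Type
  S : Type
  finS : Finite S
  inv : S → S
  inv_inv : ∀ s, inv (inv s) = s
  inv_ne : ∀ s, inv s ≠ s
  δ : V → S → Option V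
  rev : ∀ v s w, δ v s = some w → δ w (inv s) = some v
  edge_unique : ∀ v s t w, δ v s = some w → δ v t = some w → s = t
  sq_det : ∀ s t v, (δ v s).isSome → (δ v t).isSome →
    (∃ u a b c, δ u s = some a ∧ δ u t = some b ∧ δ a t = some c ∧ δ b s = some c ∧
      a ≠ b ∧ u ≠ a ∧ u ≠ b ∧ u ≠ c ∧ a ≠ c ∧ b ≠ c) →
    (∃ a b c, δ v s = some a ∧ δ v t = some b ∧ δ a t = some c ∧ δ b s = some c ∧
      a ≠ b ∧ v ≠ a ∧ v ≠ b ∧ v ≠ c ∧ a ≠ c ∧ b ≠ c)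

namespace CC

/-- The outgoing edges at `v` labeled `s` and `t` span a (embedded) square. -/
def Spans (X : CC) (v : X.V) (s t : X.S) : Prop :=
  ∃ a b c, X.δ v s = some a ∧ X.δ v t = some b ∧ X.δ a t = some c ∧ X.δ b s = some c ∧
    a ≠ b ∧ v ≠ a ∧ v ≠ b ∧ v ≠ c ∧ a ≠ c ∧ b ≠ c

/-- The labels `s` and `t` commute, `[s,t] = 1`: at some (equivalently, by `sq_det`,
any) vertex carrying both, the corresponding edges span a square. -/
def Comm (X : CC) (s t : X.S) : Prop := ∃ v, X.Spans v s t

/-- Follow the edge-path spelling the word `w` from a vertex. -/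
def follow (X : CC) : List X.S → X.V → Option X.V
  | [], v => some v
  | s :: w, v => (X.δ v s).bind (follow X w)

/-- The edge-path language `L_o^{edge}`: words spelled by edge-paths starting at `o`. -/
def Lang (X : CC) (o : X.V) : Set (List X.S) := {w | (follow X w o).isSome}

/-- `w` is a reduced word from `o` (a combinatorial geodesic: no hyperplane is
crossed twice, equivalently `w` has minimal length among all words from `o`
with the same endpoint). -/
def Reduced (X : CC) (o : X.V) (w : List X.S) : Prop :=
  ∃ p, follow X w o = some p ∧ ∀ w', follow X w' o = some p → w.length ≤ w'.length

/-- `Σ_v^{edge}`: the labels of outgoing edges at the endpoint of `v`. -/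
def EdgeAt (X : CC) (o : X.V) (v : List X.S) : Set X.S := {s | v ++ [s] ∈ Lang X o}

end CC

/-- `σ_v(w)`: apply a portrait letter by letter along `w`, starting at prefix `v`. -/
def sigmaFrom {A B : Type} (σ : List A → A → B) : List A → List A → List B
  | _, [] => []
  | v, s :: w => σ v s :: sigmaFrom σ (v ++ [s]) w

/-- The induced word map `σ(s₁…sₙ) = σ_ε(s₁)…σ_{s₁…sₙ₋₁}(sₙ)`. -/
def sigmaW {A B : Type} (σ : List A → A → B) (w : List A) : List B :=
  sigmaFrom σ [] w


def Cancel (X : CC) (v w : List X.S) : Prop :=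
  ∃ u1 u2 s, v = u1 ++ s :: X.inv s :: u2 ∧ w = u1 ++ u2

def Swap (X : CC) (v w : List X.S) : Prop :=
  ∃ u1 u2 s t, X.Comm s t ∧ v = u1 ++ s :: t :: u2 ∧ w = u1 ++ t :: s :: u2

/-- One move between words of `L_o^{edge}`. -/
def MoveL (X : CC) (o : X.V) (v w : List X.S) : Prop :=
  (Cancel X v w ∨ Cancel X w v ∨ Swap X v w) ∧ v ∈ CC.Lang X o ∧ w ∈ CC.Lang X o

/-- One move between arbitrary words over the label alphabet. -/
def MoveFree (Y : CC) (v w : List Y.S) : Prop :=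
  Cancel Y v w ∨ Cancel Y w v ∨ Swap Y v w
theorem cutLem {A : Type} {l r p q : List A} {a b : A} (h : l ++ r = p ++ a :: b :: q) :
    (∃ w, l = p ++ a :: b :: w ∧ q = w ++ r) ∨ (l = p ++ [a] ∧ r = b :: q) ∨
    (∃ w, p = l ++ w ∧ r = w ++ a :: b :: q) := by
  rcases List.append_eq_append_iff.mp h with ⟨w, hp, hr⟩ | ⟨c, hl, hq⟩
  · exact Or.inr (Or.inr ⟨w, hp, hr⟩)
  · match c, hq with
    | [], hq => exact Or.inr (Or.inr ⟨[], by simpa using hl.symm, hq.symm⟩)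
    | [x], hq =>
      simp only [List.cons_append, List.nil_append] at hq
      obtain ⟨h1, h2⟩ := List.cons.inj hq
      exact Or.inr (Or.inl ⟨h1 ▸ hl, h2.symm⟩)
    | x :: y :: c, hq =>
      rw [List.cons_append, List.cons_append] at hq
      obtain ⟨h1, hq⟩ := List.cons.inj hq
      obtain ⟨h2, hq⟩ := List.cons.inj hq
      exact Or.inl ⟨c, h1 ▸ h2 ▸ hl, hq⟩

theorem decompLem {A : Type} {u1 u2 u3 p q : List A} {s t a b : A}
    (h : u1 ++ s :: (u2 ++ t :: u3) = p ++ a :: b :: q) :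
    (∃ w, u1 = p ++ a :: b :: w ∧ q = w ++ s :: (u2 ++ t :: u3)) ∨
    (u1 = p ++ [a] ∧ b = s ∧ q = u2 ++ t :: u3) ∨
    (p = u1 ∧ a = s ∧ u2 = [] ∧ b = t ∧ q = u3) ∨
    (p = u1 ∧ a = s ∧ ∃ w, u2 = b :: w ∧ q = w ++ t :: u3) ∨
    (∃ w w', u2 = w ++ a :: b :: w' ∧ p = u1 ++ s :: w ∧ q = w' ++ t :: u3) ∨
    (∃ w, u2 = w ++ [a] ∧ p = u1 ++ s :: w ∧ b = t ∧ q = u3) ∨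
    (p = u1 ++ s :: u2 ∧ a = t ∧ ∃ w, u3 = b :: w ∧ q = w) ∨
    (∃ w w', u3 = w ++ a :: b :: w' ∧ p = u1 ++ s :: (u2 ++ t :: w) ∧ q = w') := by
  rcases cutLem h with ⟨w, h1, h2⟩ | ⟨h1, h2⟩ | ⟨w, h1, h2⟩
  · exact Or.inl ⟨w, h1, h2⟩
  · obtain ⟨hb, hq⟩ := List.cons.inj h2
    exact Or.inr (Or.inl ⟨h1, hb.symm, hq.symm⟩)
  · match w, h2 with
    | [], h2 =>
      obtain ⟨ha, h2⟩ := List.cons.inj h2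
      match u2, h2 with
      | [], h2 =>
        obtain ⟨hb, hq⟩ := List.cons.inj h2
        exact Or.inr (Or.inr (Or.inl ⟨by simpa using h1, ha.symm, rfl, hb.symm, hq.symm⟩))
      | c :: u2, h2 =>
        rw [List.cons_append] at h2
        obtain ⟨hb, hq⟩ := List.cons.inj h2
        exact Or.inr (Or.inr (Or.inr (Or.inl ⟨by simpa using h1, ha.symm, u2, by rw [hb], hq.symm⟩)))
    | x :: w, h2 =>
      rw [List.cons_append] at h2
      obtain ⟨hx, h2'⟩ := List.cons.inj h2
      subst hx
      rcases cutLem h2' with ⟨w', h3, h4⟩ | ⟨h3, h4⟩ | ⟨w', h3, h4⟩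
      · exact Or.inr (Or.inr (Or.inr (Or.inr (Or.inl ⟨w, w', h3, h1, h4⟩))))
      · obtain ⟨hb, hq⟩ := List.cons.inj h4
        exact Or.inr (Or.inr (Or.inr (Or.inr (Or.inr (Or.inl ⟨w, h3, h1, hb.symm, hq.symm⟩)))))
      · match w', h4 with
        | [], h4 =>
          obtain ⟨ha, h4⟩ := List.cons.inj h4
          refine Or.inr (Or.inr (Or.inr (Or.inr (Or.inr (Or.inr (Or.inl ⟨?_, ha.symm, _, h4, rfl⟩))))))
          rw [h1, h3]; simp
        | y :: w', h4 =>
          rw [List.cons_append] at h4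
          obtain ⟨hy, h4⟩ := List.cons.inj h4
          refine Or.inr (Or.inr (Or.inr (Or.inr (Or.inr (Or.inr (Or.inr ⟨w', q, h4, ?_, rfl⟩))))))
          rw [h1, h3, hy]

section CCLemmas
variable {Z : CC}

theorem spans_symm {v : Z.V} {s t : Z.S} (h : Z.Spans v s t) : Z.Spans v t s := by
  obtain ⟨a, b, c, h1, h2, h3, h4, n1, n2, n3, n4, n5, n6⟩ := h
  exact ⟨b, a, c, h2, h1, h4, h3, n1.symm, n3, n2, n4, n6, n5⟩

theorem comm_symm {s t : Z.S} (h : Z.Comm s t) : Z.Comm t s := by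
  obtain ⟨v, hv⟩ := h; exact ⟨v, spans_symm hv⟩

theorem comm_inv_left {s t : Z.S} (h : Z.Comm s t) : Z.Comm (Z.inv s) t := by
  obtain ⟨u, a, b, c, h1, h2, h3, h4, n1, n2, n3, n4, n5, n6⟩ := h
  exact ⟨a, u, c, b, Z.rev _ _ _ h1, h3, h2, Z.rev _ _ _ h4,
    n4, fun e => n2 e.symm, n5, n1, n3, fun e => n6 e.symm⟩

theorem comm_inv_left' {s t : Z.S} (h : Z.Comm (Z.inv s) t) : Z.Comm s t := by
  have := comm_inv_left h; rwa [Z.inv_inv] at this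

theorem comm_inv_right {s t : Z.S} (h : Z.Comm s t) : Z.Comm s (Z.inv t) :=
  comm_symm (comm_inv_left (comm_symm h))

/-- If `[s,t]=1` and we can go `m →s a →t c`, then the square closes at `m`. -/
theorem swap_follow {s t : Z.S} (h : Z.Comm s t) {m a c : Z.V}
    (h1 : Z.δ m s = some a) (h2 : Z.δ a t = some c) :
    ∃ b, Z.δ m t = some b ∧ Z.δ b s = some c := by
  have hC : Z.Comm (Z.inv s) t := comm_inv_left h
  have hrev : Z.δ a (Z.inv s) = some m := Z.rev _ _ _ h1
  obtain ⟨a', b', c', g1, g2, g3, g4, -, -, -, -, -, -⟩ :=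
    Z.sq_det (Z.inv s) t a (by rw [hrev]; rfl) (by rw [h2]; rfl) hC
  have ha' : a' = m := by rw [hrev] at g1; exact (Option.some.inj g1).symm
  have hb' : b' = c := by rw [h2] at g2; exact (Option.some.inj g2).symm
  subst ha'; subst hb'
  refine ⟨c', g3, ?_⟩
  have := Z.rev _ _ _ g4
  rwa [Z.inv_inv] at this

end CCLemmas

open CC

section FollowLemmas
variable {Z : CC} {o : Z.V}

theorem follow_nil (v : Z.V) : follow Z [] v = some v := rfl

theorem follow_cons (s : Z.S) (w : List Z.S) (v : Z.V) :
    follow Z (s :: w) v = (Z.δ v s).bind (follow Z w) := rfl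

theorem follow_append (a b : List Z.S) (v : Z.V) :
    follow Z (a ++ b) v = (follow Z a v).bind (follow Z b) := by
  induction a generalizing v with
  | nil => simp [follow]
  | cons s a ih =>
    rw [List.cons_append, follow_cons, follow_cons]
    cases h : Z.δ v s with
    | none => simp
    | some w => simp [ih]

theorem mem_lang_iff {w : List Z.S} : w ∈ Lang Z o ↔ ∃ m, follow Z w o = some m := by
  simp [Lang, Option.isSome_iff_exists]

theorem lang_append {a b : List Z.S} (h : a ++ b ∈ Lang Z o) :
    ∃ m, follow Z a o = some m ∧ (follow Z b m).isSome := by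
  obtain ⟨e, he⟩ := mem_lang_iff.mp h
  rw [follow_append] at he
  cases hm : follow Z a o with
  | none => rw [hm] at he; simp at he
  | some m =>
    rw [hm, Option.bind_some] at he
    exact ⟨m, rfl, by rw [he]; rfl⟩

theorem lang_prefix {a b : List Z.S} (h : a ++ b ∈ Lang Z o) : a ∈ Lang Z o := by
  obtain ⟨m, hm, -⟩ := lang_append h
  exact mem_lang_iff.mpr ⟨m, hm⟩

theorem lang_of_follow {a b : List Z.S} (hb : b ∈ Lang Z o)
    (h : follow Z a o = follow Z b o) : a ∈ Lang Z o := by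
  obtain ⟨m, hm⟩ := mem_lang_iff.mp hb
  exact mem_lang_iff.mpr ⟨m, h.trans hm⟩

/-- Walking `s` then `s⁻¹` comes back. -/
theorem follow_cancel_pair {u1 : List Z.S} {s : Z.S} (h : u1 ++ [s] ∈ Lang Z o) :
    follow Z (u1 ++ [s, Z.inv s]) o = follow Z u1 o := by
  obtain ⟨m, hm, hs⟩ := lang_append h
  rw [follow_cons] at hs
  cases ha : Z.δ m s with
  | none => rw [ha] at hs; simp at hs
  | some a =>
    have hrev := Z.rev _ _ _ ha
    rw [follow_append, hm]
    simp [follow, ha, hrev]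

/-- A commutation move preserves the language and the endpoint. -/
theorem swap_lang {u1 u2 : List Z.S} {s t : Z.S} (hC : Z.Comm s t)
    (h : u1 ++ s :: t :: u2 ∈ Lang Z o) :
    u1 ++ t :: s :: u2 ∈ Lang Z o ∧
      follow Z (u1 ++ t :: s :: u2) o = follow Z (u1 ++ s :: t :: u2) o := by
  obtain ⟨m, hm, hs⟩ := lang_append h
  rw [follow_cons] at hs
  cases ha : Z.δ m s with
  | none => rw [ha] at hs; simp at hs
  | some a =>
    rw [ha] at hs
    simp only [Option.bind_some, follow_cons] at hs
    cases hc : Z.δ a t with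
    | none => rw [hc] at hs; simp at hs
    | some c =>
      rw [hc] at hs
      simp only [Option.bind_some] at hs
      obtain ⟨b, hb, hbc⟩ := swap_follow hC ha hc
      have key : follow Z (u1 ++ t :: s :: u2) o = follow Z u2 c := by
        rw [follow_append, hm]
        simp [follow_cons, hb, hbc]
      have key2 : follow Z (u1 ++ s :: t :: u2) o = follow Z u2 c := by
        rw [follow_append, hm]
        simp [follow_cons, ha, hc]
      refine ⟨mem_lang_iff.mpr ?_, key.trans key2.symm⟩
      obtain ⟨e, he⟩ := Option.isSome_iff_exists.mp hs
      exact ⟨e, key.trans he⟩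

end FollowLemmas

section Confluence
variable {Z : CC}

/-- one reduction step: delete a cancellable pair or swap a commuting pair -/
def RedStep (Z : CC) (y z : List Z.S) : Prop := Cancel Z y z ∨ Swap Z y z

abbrev Red (Z : CC) := Relation.ReflTransGen (RedStep Z)
abbrev SwapStar (Z : CC) := Relation.ReflTransGen (Swap Z)

/-- delete a pair `s, s⁻¹` separated by a block of letters commuting with `s` -/
def PairDel (Z : CC) (y b : List Z.S) : Prop :=
  ∃ u1 u2 u3 s, (∀ a ∈ u2, Z.Comm s a) ∧
    y = u1 ++ s :: (u2 ++ Z.inv s :: u3) ∧ b = u1 ++ (u2 ++ u3)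

theorem swap_symm {y z : List Z.S} (h : Swap Z y z) : Swap Z z y := by
  obtain ⟨u1, u2, s, t, hC, h1, h2⟩ := h
  exact ⟨u1, u2, t, s, comm_symm hC, h2, h1⟩

theorem swapStar_symm {y z : List Z.S} (h : SwapStar Z y z) : SwapStar Z z y := by
  induction h with
  | refl => exact Relation.ReflTransGen.refl
  | tail _ h2 ih => exact Relation.ReflTransGen.head (swap_symm h2) ih

theorem swapStar_red {y z : List Z.S} (h : SwapStar Z y z) : Red Z y z :=
  Relation.ReflTransGen.mono (r := Swap Z) (p := RedStep Z) (fun _ _ h => Or.inr h) _ _ h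

theorem swap_length {y z : List Z.S} (h : Swap Z y z) : y.length = z.length := by
  obtain ⟨u1, u2, s, t, _, h1, h2⟩ := h; subst h1; subst h2; simp

theorem swapStar_length {y z : List Z.S} (h : SwapStar Z y z) : y.length = z.length := by
  induction h with
  | refl => rfl
  | tail _ h2 ih => exact ih.trans (swap_length h2)

theorem cancel_length {y z : List Z.S} (h : Cancel Z y z) : y.length = z.length + 2 := by
  obtain ⟨u1, u2, s, h1, h2⟩ := h; subst h1; subst h2; simp; omega

theorem moveThrough {x : Z.S} :
    ∀ (u2 p r : List Z.S), (∀ α ∈ u2, Z.Comm x α) →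
      SwapStar Z (p ++ x :: (u2 ++ r)) (p ++ (u2 ++ (x :: r)))
  | [], p, r, _ => by
    simp only [List.nil_append]
    exact Relation.ReflTransGen.refl
  | α :: u2, p, r, h => by
    refine Relation.ReflTransGen.head (⟨p, u2 ++ r, x, α, h α (by simp), rfl, rfl⟩ : Swap Z _ _) ?_
    have := moveThrough u2 (p ++ [α]) r (fun a ha => h a (by simp [ha]))
    simpa using this

theorem cancel_pairDel {y b : List Z.S} (h : Cancel Z y b) : PairDel Z y b := by
  obtain ⟨u1, u2, s, h1, h2⟩ := h
  exact ⟨u1, [], u2, s, by simp, by simpa using h1, by simpa using h2⟩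

theorem pairDel_red {y b : List Z.S} (h : PairDel Z y b) : Red Z y b := by
  obtain ⟨u1, u2, u3, s, hcm, hy, hb⟩ := h
  subst hy; subst hb
  refine Relation.ReflTransGen.tail (swapStar_red (moveThrough u2 u1 (Z.inv s :: u3) hcm))
    (Or.inl ⟨u1 ++ u2, u3, s, by simp, by simp⟩)

/-- transport of a separated-pair deletion across one commutation move -/
theorem PT {y y' b : List Z.S} (hsw : Swap Z y y') (hpd : PairDel Z y b) :
    ∃ b', PairDel Z y' b' ∧ (b = b' ∨ Swap Z b b') := by
  obtain ⟨u1, u2, u3, s, hcm, hy, hb⟩ := hpd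
  obtain ⟨p, q, α, β, hC, hy2, hy'⟩ := hsw
  rw [hy] at hy2
  rcases decompLem hy2 with ⟨w, h1, h2⟩ | ⟨h1, hβ, h2⟩ | ⟨h1, hα, hu2, hβ, h2⟩ |
    ⟨h1, hα, w, hu2, h2⟩ | ⟨w, w', hu2, h1, h2⟩ | ⟨w, hu2, h1, hβ, h2⟩ |
    ⟨h1, hα, w, hu3, h2⟩ | ⟨w, w', hu3, h1, h2⟩
  · -- C1 : swap inside u1
    refine ⟨(p ++ β :: α :: w) ++ (u2 ++ u3),
      ⟨p ++ β :: α :: w, u2, u3, s, hcm, by rw [hy', h2]; simp, rfl⟩,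
      Or.inr ⟨p, w ++ (u2 ++ u3), α, β, hC, by rw [hb, h1]; simp, by simp⟩⟩
  · -- C2 : swap pair = (last of u1, s)
    subst hβ
    refine ⟨b, ⟨p, α :: u2, u3, β, ?_, by rw [hy', h2]; simp, by rw [hb, h1]; simp⟩, Or.inl rfl⟩
    intro a ha
    rcases List.mem_cons.mp ha with rfl | ha'
    · exact comm_symm hC
    · exact hcm a ha'
  · -- C3 : swap pair = (s, s⁻¹), empty gap
    subst hα; subst hβ; subst hu2
    exact ⟨b, ⟨u1, [], u3, Z.inv α, by simp, by rw [hy', h1, h2]; simp [Z.inv_inv],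
      by rw [hb]⟩, Or.inl rfl⟩
  · -- C4 : swap pair = (s, first of gap)
    subst hα
    refine ⟨b, ⟨u1 ++ [β], w, u3, α, fun a ha => hcm a (by rw [hu2]; simp [ha]),
      by rw [hy', h1, h2]; simp, by rw [hb, hu2]; simp⟩, Or.inl rfl⟩
  · -- C5 : swap inside the gap
    refine ⟨u1 ++ ((w ++ β :: α :: w') ++ u3),
      ⟨u1, w ++ β :: α :: w', u3, s, ?_, by rw [hy', h1, h2]; simp, rfl⟩,
      Or.inr ⟨u1 ++ w, w' ++ u3, α, β, hC, by rw [hb, hu2]; simp, by simp⟩⟩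
    intro a ha
    apply hcm a
    rw [hu2]
    simp only [List.mem_append, List.mem_cons] at ha ⊢
    tauto
  · -- C6 : swap pair = (last of gap, s⁻¹)
    subst hβ
    refine ⟨b, ⟨u1, w, α :: u3, s, fun a ha => hcm a (by rw [hu2]; simp [ha]),
      by rw [hy', h1, h2]; simp, by rw [hb, hu2]; simp⟩, Or.inl rfl⟩
  · -- C7 : swap pair = (s⁻¹, first of u3)
    refine ⟨b, ⟨u1, u2 ++ [β], w, s, ?_, by rw [hy', h1, h2, hα]; simp, by rw [hb, hu3]; simp⟩,
      Or.inl rfl⟩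
    rintro a ha
    rcases List.mem_append.mp ha with ha | ha
    · exact hcm a ha
    · rw [List.mem_singleton.mp ha]; exact comm_inv_left' (hα ▸ hC)
  · -- C8 : swap inside u3
    refine ⟨u1 ++ (u2 ++ (w ++ β :: α :: w')),
      ⟨u1, u2, w ++ β :: α :: w', s, hcm, by rw [hy', h1, h2]; simp, rfl⟩,
      Or.inr ⟨(u1 ++ u2) ++ w, w', α, β, hC, by rw [hb, hu3]; simp, by simp⟩⟩

theorem PTstar {y y' b : List Z.S} (hsw : SwapStar Z y y') (hpd : PairDel Z y b) :
    ∃ b', PairDel Z y' b' ∧ SwapStar Z b b' := by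
  induction hsw with
  | refl => exact ⟨b, hpd, Relation.ReflTransGen.refl⟩
  | tail _ h2 ih =>
    obtain ⟨b1, hpd1, hsw1⟩ := ih
    obtain ⟨b', hpd', hrel⟩ := PT h2 hpd1
    rcases hrel with h | hrel
    · exact ⟨b', hpd', h ▸ hsw1⟩
    · exact ⟨b', hpd', hsw1.tail hrel⟩

/-- critical pair analysis: a separated-pair deletion vs. an adjacent cancellation -/
theorem corePD {y b c : List Z.S} (hpd : PairDel Z y b) (hc : Cancel Z y c) :
    SwapStar Z b c ∨ ∃ d, Cancel Z b d ∧ PairDel Z c d := by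
  obtain ⟨u1, u2, u3, s, hcm, hy, hb⟩ := hpd
  obtain ⟨p, q, tc, hy2, hcq⟩ := hc
  rw [hy] at hy2
  rcases decompLem hy2 with ⟨w, h1, h2⟩ | ⟨h1, hs, h2⟩ | ⟨h1, htc, hu2, hb2, h2⟩ |
    ⟨h1, htc, w, hu2, h2⟩ | ⟨w, w', hu2, h1, h2⟩ | ⟨w, hu2, h1, hinv, h2⟩ |
    ⟨h1, htc, w, hu3, h2⟩ | ⟨w, w', hu3, h1, h2⟩
  · -- C1 : cancel pair inside u1
    refine Or.inr ⟨(p ++ w) ++ (u2 ++ u3),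
      ⟨p, w ++ (u2 ++ u3), tc, by rw [hb, h1]; simp, by simp⟩,
      ⟨p ++ w, u2, u3, s, hcm, by rw [hcq, h2]; simp, by simp⟩⟩
  · -- C2 : cancel pair = (last of u1, s) with s = tc⁻¹
    have htc : tc = Z.inv s := by rw [← hs, Z.inv_inv]
    subst htc
    left
    have hmv := moveThrough u2 p u3 (fun a ha => comm_inv_left (hcm a ha))
    have e1 : b = p ++ Z.inv s :: (u2 ++ u3) := by rw [hb, h1]; simp
    have e2 : c = p ++ (u2 ++ (Z.inv s :: u3)) := by rw [hcq, h2]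
    rw [e1, e2]; exact hmv
  · -- C3 : cancel pair = (s, s⁻¹)
    left
    have e1 : b = u1 ++ u3 := by rw [hb, hu2]; simp
    have e2 : c = u1 ++ u3 := by rw [hcq, h1, h2]
    rw [e1, e2]
  · -- C4 : cancel pair = (s, first of gap) with gap head s⁻¹
    subst htc
    left
    have hmv := moveThrough w u1 u3 (fun a ha => comm_inv_left (hcm a (by rw [hu2]; simp [ha])))
    have e1 : b = u1 ++ Z.inv tc :: (w ++ u3) := by rw [hb, hu2]; simp
    have e2 : c = u1 ++ (w ++ (Z.inv tc :: u3)) := by rw [hcq, h1, h2]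
    rw [e1, e2]; exact hmv
  · -- C5 : cancel pair inside the gap
    refine Or.inr ⟨(u1 ++ w) ++ (w' ++ u3),
      ⟨u1 ++ w, w' ++ u3, tc, by rw [hb, hu2]; simp, by simp⟩,
      ⟨u1, w ++ w', u3, s, ?_, by rw [hcq, h1, h2]; simp, by simp⟩⟩
    intro a ha
    apply hcm a
    rw [hu2]
    simp only [List.mem_append, List.mem_cons] at ha ⊢
    tauto
  · -- C6 : cancel pair = (last of gap, s⁻¹), gap last = s
    have htc : tc = s := by
      have := congrArg Z.inv hinv; rwa [Z.inv_inv, Z.inv_inv] at this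
    subst htc
    left
    have hmv := moveThrough w u1 u3 (fun a ha => hcm a (by rw [hu2]; simp [ha]))
    have e1 : b = u1 ++ (w ++ (tc :: u3)) := by rw [hb, hu2]; simp
    have e2 : c = u1 ++ tc :: (w ++ u3) := by rw [hcq, h1, h2]; simp
    rw [e1, e2]; exact swapStar_symm hmv
  · -- C7 : cancel pair = (s⁻¹, first of u3), u3 head = s
    subst htc
    left
    have hs : Z.inv (Z.inv s) = s := Z.inv_inv s
    have hmv := moveThrough u2 u1 (w) (fun a ha => hcm a ha)
    have e1 : b = u1 ++ (u2 ++ (s :: w)) := by rw [hb, hu3, hs]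
    have e2 : c = u1 ++ s :: (u2 ++ w) := by rw [hcq, h1, h2]; simp
    rw [e1, e2]; exact swapStar_symm hmv
  · -- C8 : cancel pair inside u3
    refine Or.inr ⟨((u1 ++ u2) ++ w) ++ w',
      ⟨(u1 ++ u2) ++ w, w', tc, by rw [hb, hu3]; simp, by simp⟩,
      ⟨u1, u2, w ++ w', s, hcm, by rw [hcq, h1, h2]; simp, by simp⟩⟩

end Confluence

section Confluence2
variable {Z : CC}

theorem redDecomp {a b : List Z.S} (h : Red Z a b) :
    SwapStar Z a b ∨ ∃ x x₂, SwapStar Z a x ∧ Cancel Z x x₂ ∧ Red Z x₂ b := by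
  induction h using Relation.ReflTransGen.head_induction_on with
  | refl => exact Or.inl Relation.ReflTransGen.refl
  | head hstep hrest ih =>
    rcases hstep with hcan | hswp
    · exact Or.inr ⟨_, _, Relation.ReflTransGen.refl, hcan, hrest⟩
    · rcases ih with hs | ⟨x, x₂, h1, h2, h3⟩
      · exact Or.inl (Relation.ReflTransGen.head hswp hs)
      · exact Or.inr ⟨x, x₂, Relation.ReflTransGen.head hswp h1, h2, h3⟩

theorem conf_aux (n : ℕ) : ∀ a b c : List Z.S, a.length ≤ n →
    Red Z a b → Red Z a c → ∃ d, Red Z b d ∧ Red Z c d := by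
  induction n with
  | zero =>
    intro a b c hl hb hc
    rcases redDecomp hb with hsb | ⟨x, x₂, hax, hxx, -⟩
    · exact ⟨c, (swapStar_red (swapStar_symm hsb)).trans hc, Relation.ReflTransGen.refl⟩
    · exfalso
      have h1 := swapStar_length hax
      have h2 := cancel_length hxx
      omega
  | succ n ih =>
    intro a b c hl hb hc
    rcases redDecomp hb with hsb | ⟨x, x₂, hax, hxx, hx2b⟩
    · exact ⟨c, (swapStar_red (swapStar_symm hsb)).trans hc, Relation.ReflTransGen.refl⟩
    rcases redDecomp hc with hsc | ⟨x', x₂', hax', hxx', hx2c⟩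
    · exact ⟨b, Relation.ReflTransGen.refl, (swapStar_red (swapStar_symm hsc)).trans hb⟩
    have hxx'' : SwapStar Z x x' := (swapStar_symm hax).trans hax'
    obtain ⟨p₂, hpd', hsw₂⟩ := PTstar hxx'' (cancel_pairDel hxx)
    have la1 := swapStar_length hax
    have la2 := swapStar_length hax'
    have lc1 := cancel_length hxx
    have lc2 := cancel_length hxx'
    rcases corePD hpd' hxx' with hswc | ⟨d₀, hcd, hpdd⟩
    · have h1 : Red Z x₂ c := (swapStar_red (hsw₂.trans hswc)).trans hx2c
      exact ih x₂ b c (by omega) hx2b h1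
    · have hred1 : Red Z x₂ d₀ := (swapStar_red hsw₂).tail (Or.inl hcd)
      have hred2 : Red Z x₂' d₀ := pairDel_red hpdd
      have lsw := swapStar_length hsw₂
      have lcd := cancel_length hcd
      obtain ⟨e₁, he₁b, he₁d⟩ := ih x₂ b d₀ (by omega) hx2b hred1
      obtain ⟨e₂, he₂c, he₂d⟩ := ih x₂' c d₀ (by omega) hx2c hred2
      obtain ⟨f, hf1, hf2⟩ := ih d₀ e₁ e₂ (by omega) he₁d he₂d
      exact ⟨f, he₁b.trans hf1, he₂c.trans hf2⟩

theorem conf {a b c : List Z.S} (hb : Red Z a b) (hc : Red Z a c) :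
    ∃ d, Red Z b d ∧ Red Z c d :=
  conf_aux a.length a b c le_rfl hb hc

theorem movefree_symm {y z : List Z.S} (h : MoveFree Z y z) : MoveFree Z z y := by
  rcases h with h | h | h
  · exact Or.inr (Or.inl h)
  · exact Or.inl h
  · exact Or.inr (Or.inr (swap_symm h))

theorem rtg_movefree_symm {y z : List Z.S} (h : Relation.ReflTransGen (MoveFree Z) y z) :
    Relation.ReflTransGen (MoveFree Z) z y := by
  induction h with
  | refl => exact Relation.ReflTransGen.refl
  | tail _ h2 ih => exact Relation.ReflTransGen.head (movefree_symm h2) ih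

theorem red_movefree {y z : List Z.S} (h : Red Z y z) :
    Relation.ReflTransGen (MoveFree Z) y z :=
  Relation.ReflTransGen.mono (r := RedStep Z) (p := MoveFree Z) (fun _ _ h => h.elim Or.inl (fun h => Or.inr (Or.inr h))) _ _ h

theorem join_of_moves {y z : List Z.S} (h : Relation.ReflTransGen (MoveFree Z) y z) :
    ∃ d, Red Z y d ∧ Red Z z d := by
  induction h using Relation.ReflTransGen.head_induction_on with
  | refl => exact ⟨z, Relation.ReflTransGen.refl, Relation.ReflTransGen.refl⟩
  | head hstep _ ih =>
    obtain ⟨d, hcd, hzd⟩ := ih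
    rcases hstep with hcan | hcan | hswp
    · exact ⟨d, Relation.ReflTransGen.head (Or.inl hcan) hcd, hzd⟩
    · obtain ⟨e, hye, hde⟩ := conf (Relation.ReflTransGen.single (Or.inl hcan)) hcd
      exact ⟨e, hye, hzd.trans hde⟩
    · exact ⟨d, Relation.ReflTransGen.head (Or.inr hswp) hcd, hzd⟩

end Confluence2

section SigmaLemmas
variable {A B : Type} {σ : List A → A → B}

theorem sigmaFrom_append (w1 : List A) : ∀ (c w2 : List A),
    sigmaFrom σ c (w1 ++ w2) = sigmaFrom σ c w1 ++ sigmaFrom σ (c ++ w1) w2 := by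
  induction w1 with
  | nil => intro c w2; simp [sigmaFrom]
  | cons s w1 ih =>
    intro c w2
    rw [List.cons_append]
    show σ c s :: sigmaFrom σ (c ++ [s]) (w1 ++ w2) =
      σ c s :: (sigmaFrom σ (c ++ [s]) w1 ++ sigmaFrom σ (c ++ s :: w1) w2)
    rw [ih (c ++ [s]) w2]
    simp

theorem sigmaFrom_length : ∀ (c w : List A), (sigmaFrom σ c w).length = w.length
  | _, [] => rfl
  | c, s :: w => by simp [sigmaFrom, sigmaFrom_length (c ++ [s]) w]

theorem sigmaFrom_eq_append : ∀ (Aw : List B) {Bw : List B} {c v : List A},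
    sigmaFrom σ c v = Aw ++ Bw →
    ∃ p q, v = p ++ q ∧ Aw = sigmaFrom σ c p ∧ Bw = sigmaFrom σ (c ++ p) q
  | [], Bw, c, v, h => ⟨[], v, by simp, rfl, by simpa using h.symm⟩
  | a :: Aw, Bw, c, v, h => by
    match v, h with
    | [], h => simp [sigmaFrom] at h
    | s :: v, h =>
      simp only [sigmaFrom, List.cons_append] at h
      obtain ⟨h1, h2⟩ := List.cons.inj h
      obtain ⟨p, q, hv, hA, hB⟩ := sigmaFrom_eq_append Aw h2
      exact ⟨s :: p, q, by rw [hv]; simp, by simp [sigmaFrom, h1, hA], by simpa using hB⟩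

end SigmaLemmas

section FollowMore
variable {Z : CC} {o : Z.V}

theorem follow_single (s : Z.S) (m : Z.V) : follow Z [s] m = Z.δ m s := by
  cases h : Z.δ m s <;> simp [follow, h]

theorem follow_two (s t : Z.S) (m : Z.V) :
    follow Z [s, t] m = (Z.δ m s).bind (fun x => Z.δ x t) := by
  cases h : Z.δ m s <;> simp [follow, h, follow_single]

theorem lang_two {u1 u2 : List Z.S} {s t : Z.S} (h : u1 ++ s :: t :: u2 ∈ Lang Z o) :
    ∃ m a c, follow Z u1 o = some m ∧ Z.δ m s = some a ∧ Z.δ a t = some c ∧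
      (follow Z u2 c).isSome := by
  obtain ⟨m, hm, hs⟩ := lang_append h
  rw [follow_cons] at hs
  cases ha : Z.δ m s with
  | none => rw [ha] at hs; simp at hs
  | some a =>
    rw [ha, Option.bind_some, follow_cons] at hs
    cases hc : Z.δ a t with
    | none => rw [hc] at hs; simp at hs
    | some c =>
      rw [hc, Option.bind_some] at hs
      exact ⟨m, a, c, hm, ha, hc, hs⟩

end FollowMore

section Portrait
variable {X Y : CC} {o : X.V} {σ : List X.S → X.S → Y.S}

theorem sigmaW_split (u1 r : List X.S) :
    sigmaW σ (u1 ++ r) = sigmaW σ u1 ++ sigmaFrom σ u1 r := by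
  unfold sigmaW
  rw [sigmaFrom_append]
  simp

theorem sigmaFrom_two (c : List X.S) (x y : X.S) (r : List X.S) :
    sigmaFrom σ c (x :: y :: r) =
      σ c x :: σ (c ++ [x]) y :: sigmaFrom σ ((c ++ [x]) ++ [y]) r := rfl

theorem congrFrom
    (hend : ∀ v ∈ CC.Lang X o, ∀ w ∈ CC.Lang X o,
      CC.follow X v o = CC.follow X w o → σ v = σ w) :
    ∀ (q a b : List X.S), a ∈ Lang X o → b ∈ Lang X o →
      follow X a o = follow X b o → a ++ q ∈ Lang X o →
      sigmaFrom σ a q = sigmaFrom σ b q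
  | [], a, b, _, _, _, _ => rfl
  | s :: q, a, b, ha, hb, hf, hm => by
    have h1 : σ a s = σ b s := congrFun (hend a ha b hb hf) s
    have hmem : (a ++ [s]) ++ q ∈ Lang X o := by
      rw [List.append_assoc, List.singleton_append]; exact hm
    have ha' : a ++ [s] ∈ Lang X o := lang_prefix hmem
    have hf' : follow X (a ++ [s]) o = follow X (b ++ [s]) o := by
      rw [follow_append, follow_append, hf]
    have hb' : b ++ [s] ∈ Lang X o := lang_of_follow ha' hf'.symm
    show σ a s :: sigmaFrom σ (a ++ [s]) q = σ b s :: sigmaFrom σ (b ++ [s]) q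
    rw [h1, congrFrom hend q (a ++ [s]) (b ++ [s]) ha' hb' hf' hmem]

theorem sigma_inj
    (hinj : ∀ v ∈ CC.Lang X o, Set.InjOn (σ v) (CC.EdgeAt X o v)) :
    ∀ (q q' p : List X.S), p ∈ Lang X o → p ++ q ∈ Lang X o → p ++ q' ∈ Lang X o →
      sigmaFrom σ p q = sigmaFrom σ p q' → q = q'
  | [], q', p, _, _, _, h => by
    have := congrArg List.length h
    rw [sigmaFrom_length, sigmaFrom_length] at this
    exact (List.length_eq_zero_iff.mp this.symm).symm
  | s :: q, q', p, hp, hpq, hpq', h => by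
    match q', h with
    | [], h =>
      have := congrArg List.length h
      rw [sigmaFrom_length, sigmaFrom_length] at this
      simp at this
    | s' :: q₂, h =>
      rw [show sigmaFrom σ p (s :: q) = σ p s :: sigmaFrom σ (p ++ [s]) q from rfl,
        show sigmaFrom σ p (s' :: q₂) = σ p s' :: sigmaFrom σ (p ++ [s']) q₂ from rfl] at h
      obtain ⟨h1, h2⟩ := List.cons.inj h
      have hs : p ++ [s] ∈ Lang X o := lang_prefix (by
        rw [List.append_assoc, List.singleton_append]; exact hpq)
      have hs' : p ++ [s'] ∈ Lang X o := lang_prefix (by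
        rw [List.append_assoc, List.singleton_append]; exact hpq')
      have he : s = s' := hinj p hp hs hs' h1
      subst he
      have h3 := sigma_inj hinj q q₂ (p ++ [s]) hs
        (by rw [List.append_assoc, List.singleton_append]; exact hpq)
        (by rw [List.append_assoc, List.singleton_append]; exact hpq') h2
      rw [h3]

theorem cancelMap
    (hinv : ∀ v ∈ CC.Lang X o, ∀ s ∈ CC.EdgeAt X o v,
      σ (v ++ [s]) (X.inv s) = Y.inv (σ v s))
    (hend : ∀ v ∈ CC.Lang X o, ∀ w ∈ CC.Lang X o,
      CC.follow X v o = CC.follow X w o → σ v = σ w)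
    (u1 u2 : List X.S) (s : X.S)
    (hv : u1 ++ s :: X.inv s :: u2 ∈ CC.Lang X o) :
    Cancel Y (sigmaW σ (u1 ++ s :: X.inv s :: u2)) (sigmaW σ (u1 ++ u2)) := by
  have hps : u1 ++ [s] ∈ Lang X o := lang_prefix (by
    rw [List.append_assoc, List.singleton_append]; exact hv)
  have hu1 : u1 ∈ Lang X o := lang_prefix hps
  have hse : σ (u1 ++ [s]) (X.inv s) = Y.inv (σ u1 s) := hinv u1 hu1 s hps
  have hfoll : follow X ((u1 ++ [s]) ++ [X.inv s]) o = follow X u1 o := by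
    rw [show (u1 ++ [s]) ++ [X.inv s] = u1 ++ [s, X.inv s] by simp]
    exact follow_cancel_pair hps
  have hA : (u1 ++ [s]) ++ [X.inv s] ∈ Lang X o := lang_of_follow hu1 hfoll
  have hmem : ((u1 ++ [s]) ++ [X.inv s]) ++ u2 ∈ Lang X o := by
    rw [show ((u1 ++ [s]) ++ [X.inv s]) ++ u2 = u1 ++ s :: X.inv s :: u2 by simp]
    exact hv
  have htail : sigmaFrom σ ((u1 ++ [s]) ++ [X.inv s]) u2 = sigmaFrom σ u1 u2 :=
    congrFrom hend u2 _ u1 hA hu1 hfoll hmem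
  refine ⟨sigmaW σ u1, sigmaFrom σ u1 u2, σ u1 s, ?_, ?_⟩
  · rw [sigmaW_split, sigmaFrom_two, hse, htail]
  · rw [sigmaW_split]

theorem swapMap
    (hcomm : ∀ v ∈ CC.Lang X o, ∀ s ∈ CC.EdgeAt X o v, ∀ t ∈ CC.EdgeAt X o v,
      (X.Comm s t ↔ Y.Comm (σ v s) (σ v t)))
    (hpar : ∀ v ∈ CC.Lang X o, ∀ s ∈ CC.EdgeAt X o v, ∀ t ∈ CC.EdgeAt X o v,
      X.Comm s t → σ (v ++ [s]) t = σ v t)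
    (hend : ∀ v ∈ CC.Lang X o, ∀ w ∈ CC.Lang X o,
      CC.follow X v o = CC.follow X w o → σ v = σ w)
    (u1 u2 : List X.S) (s t : X.S) (hC : X.Comm s t)
    (hv : u1 ++ s :: t :: u2 ∈ CC.Lang X o) (hw : u1 ++ t :: s :: u2 ∈ CC.Lang X o) :
    Swap Y (sigmaW σ (u1 ++ s :: t :: u2)) (sigmaW σ (u1 ++ t :: s :: u2)) := by
  have hps : u1 ++ [s] ∈ Lang X o := lang_prefix (by
    rw [List.append_assoc, List.singleton_append]; exact hv)
  have hpt : u1 ++ [t] ∈ Lang X o := lang_prefix (by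
    rw [List.append_assoc, List.singleton_append]; exact hw)
  have hu1 : u1 ∈ Lang X o := lang_prefix hps
  have hYC : Y.Comm (σ u1 s) (σ u1 t) := (hcomm u1 hu1 s hps t hpt).mp hC
  have hp1 : σ (u1 ++ [s]) t = σ u1 t := hpar u1 hu1 s hps t hpt hC
  have hp2 : σ (u1 ++ [t]) s = σ u1 s := hpar u1 hu1 t hpt s hps (comm_symm hC)
  obtain ⟨m, a, c, hm, ha, hc, -⟩ := lang_two hv
  obtain ⟨b, hb, hbc⟩ := swap_follow hC ha hc
  have hfst : follow X ((u1 ++ [s]) ++ [t]) o = some c := by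
    rw [show (u1 ++ [s]) ++ [t] = u1 ++ [s, t] by simp, follow_append, hm,
      Option.bind_some, follow_two, ha, Option.bind_some, hc]
  have hfts : follow X ((u1 ++ [t]) ++ [s]) o = some c := by
    rw [show (u1 ++ [t]) ++ [s] = u1 ++ [t, s] by simp, follow_append, hm,
      Option.bind_some, follow_two, hb, Option.bind_some, hbc]
  have hAst : (u1 ++ [s]) ++ [t] ∈ Lang X o := mem_lang_iff.mpr ⟨c, hfst⟩
  have hAts : (u1 ++ [t]) ++ [s] ∈ Lang X o := mem_lang_iff.mpr ⟨c, hfts⟩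
  have hmemst : ((u1 ++ [s]) ++ [t]) ++ u2 ∈ Lang X o := by
    rw [show ((u1 ++ [s]) ++ [t]) ++ u2 = u1 ++ s :: t :: u2 by simp]
    exact hv
  have htail : sigmaFrom σ ((u1 ++ [t]) ++ [s]) u2 = sigmaFrom σ ((u1 ++ [s]) ++ [t]) u2 :=
    congrFrom hend u2 _ _ hAts hAst (hfts.trans hfst.symm) (by
      rw [show ((u1 ++ [t]) ++ [s]) ++ u2 = u1 ++ t :: s :: u2 by simp]
      exact hw)
  refine ⟨sigmaW σ u1, sigmaFrom σ ((u1 ++ [s]) ++ [t]) u2, σ u1 s, σ u1 t, hYC, ?_, ?_⟩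
  · rw [sigmaW_split, sigmaFrom_two, hp1]
  · rw [sigmaW_split, sigmaFrom_two, hp2, hp1.symm, htail]
end Portrait

section Final
variable {X Y : CC} {o : X.V} {σ : List X.S → X.S → Y.S}

theorem liftStep
    (hinj : ∀ v ∈ CC.Lang X o, Set.InjOn (σ v) (CC.EdgeAt X o v))
    (hcomm : ∀ v ∈ CC.Lang X o, ∀ s ∈ CC.EdgeAt X o v, ∀ t ∈ CC.EdgeAt X o v,
      (X.Comm s t ↔ Y.Comm (σ v s) (σ v t)))
    (hpar : ∀ v ∈ CC.Lang X o, ∀ s ∈ CC.EdgeAt X o v, ∀ t ∈ CC.EdgeAt X o v,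
      X.Comm s t → σ (v ++ [s]) t = σ v t)
    (hinv : ∀ v ∈ CC.Lang X o, ∀ s ∈ CC.EdgeAt X o v,
      σ (v ++ [s]) (X.inv s) = Y.inv (σ v s))
    (hend : ∀ v ∈ CC.Lang X o, ∀ w ∈ CC.Lang X o,
      CC.follow X v o = CC.follow X w o → σ v = σ w)
    {v : List X.S} (hv : v ∈ CC.Lang X o) {y : List Y.S}
    (hstep : RedStep Y (sigmaW σ v) y) :
    ∃ v', v' ∈ CC.Lang X o ∧ MoveL X o v v' ∧ sigmaW σ v' = y := by
  rcases hstep with ⟨A, B, t, hA, hy⟩ | ⟨A, B, t1, t2, hYC, hA, hy⟩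
  · -- a cancellation on the σ-side
    obtain ⟨p, q, hveq, hA2, hB2⟩ := sigmaFrom_eq_append A (hA : sigmaFrom σ [] v = _)
    rw [List.nil_append] at hB2
    match q, hB2, hveq with
    | [], hB2, _ => simp [sigmaFrom] at hB2
    | [x], hB2, _ => simp [sigmaFrom] at hB2
    | x :: x₁ :: q₂, hB2, hveq =>
      rw [sigmaFrom_two] at hB2
      obtain ⟨ht, hB2⟩ := List.cons.inj hB2
      obtain ⟨hti, hB3⟩ := List.cons.inj hB2
      subst hveq
      have hps : p ++ [x] ∈ Lang X o := lang_prefix (by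
        rw [List.append_assoc, List.singleton_append]; exact hv)
      have hp : p ∈ Lang X o := lang_prefix hps
      have hpsx : (p ++ [x]) ++ [x₁] ∈ Lang X o := lang_prefix (by
        rw [show (((p ++ [x]) ++ [x₁]) ++ q₂ : List X.S) = p ++ x :: x₁ :: q₂ by simp]
        exact hv)
      have hfoll : follow X ((p ++ [x]) ++ [X.inv x]) o = follow X p o := by
        rw [show ((p ++ [x]) ++ [X.inv x] : List X.S) = p ++ [x, X.inv x] by simp]
        exact follow_cancel_pair hps
      have hIA : (p ++ [x]) ++ [X.inv x] ∈ Lang X o := lang_of_follow hp hfoll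
      have heq : σ (p ++ [x]) x₁ = σ (p ++ [x]) (X.inv x) := by
        rw [hinv p hp x hps, ← ht]
        exact hti.symm
      have hx₁ : x₁ = X.inv x := hinj (p ++ [x]) hps hpsx hIA heq
      subst hx₁
      have hfv : follow X (p ++ q₂) o = follow X (p ++ x :: X.inv x :: q₂) o := by
        rw [show (p ++ x :: X.inv x :: q₂ : List X.S) = ((p ++ [x]) ++ [X.inv x]) ++ q₂ by simp,
          follow_append, follow_append, hfoll]
      have hv' : p ++ q₂ ∈ Lang X o := lang_of_follow hv hfv
      have hB4 : B = sigmaFrom σ p q₂ := by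
        rw [hB3]
        exact congrFrom hend q₂ _ p hIA hp hfoll (by
          rw [show (((p ++ [x]) ++ [X.inv x]) ++ q₂ : List X.S) = p ++ x :: X.inv x :: q₂ by simp]
          exact hv)
      refine ⟨p ++ q₂, hv', ⟨Or.inl ⟨p, q₂, x, rfl, rfl⟩, hv, hv'⟩, ?_⟩
      rw [hy, sigmaW_split]
      unfold sigmaW
      rw [← hA2, ← hB4]
  · -- a commutation on the σ-side
    obtain ⟨p, q, hveq, hA2, hB2⟩ := sigmaFrom_eq_append A (hA : sigmaFrom σ [] v = _)
    rw [List.nil_append] at hB2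
    match q, hB2, hveq with
    | [], hB2, _ => simp [sigmaFrom] at hB2
    | [x], hB2, _ => simp [sigmaFrom] at hB2
    | x :: x₁ :: q₂, hB2, hveq =>
      rw [sigmaFrom_two] at hB2
      obtain ⟨ht1, hB2⟩ := List.cons.inj hB2
      obtain ⟨ht2, hB3⟩ := List.cons.inj hB2
      subst hveq
      have hps : p ++ [x] ∈ Lang X o := lang_prefix (by
        rw [List.append_assoc, List.singleton_append]; exact hv)
      have hp : p ∈ Lang X o := lang_prefix hps
      have hpsx : (p ++ [x]) ++ [x₁] ∈ Lang X o := lang_prefix (by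
        rw [show (((p ++ [x]) ++ [x₁]) ++ q₂ : List X.S) = p ++ x :: x₁ :: q₂ by simp]
        exact hv)
      obtain ⟨m, a, c, hm, ha, hc, -⟩ := lang_two hv
      have hfoll : follow X ((p ++ [x]) ++ [X.inv x]) o = follow X p o := by
        rw [show ((p ++ [x]) ++ [X.inv x] : List X.S) = p ++ [x, X.inv x] by simp]
        exact follow_cancel_pair hps
      have hIA : (p ++ [x]) ++ [X.inv x] ∈ Lang X o := lang_of_follow hp hfoll
      have hYC' : Y.Comm (σ (p ++ [x]) (X.inv x)) (σ (p ++ [x]) x₁) := by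
        rw [hinv p hp x hps, ← ht1, ← ht2]
        exact comm_inv_left hYC
      have hC : X.Comm x x₁ :=
        comm_inv_left' ((hcomm (p ++ [x]) hps (X.inv x) hIA x₁ hpsx).mpr hYC')
      obtain ⟨b, hb, hbc⟩ := swap_follow hC ha hc
      have hptx : p ++ [x₁] ∈ Lang X o := mem_lang_iff.mpr ⟨b, by
        rw [follow_append, hm, Option.bind_some, follow_single, hb]⟩
      have hfst : follow X ((p ++ [x]) ++ [x₁]) o = some c := by
        rw [show ((p ++ [x]) ++ [x₁] : List X.S) = p ++ [x, x₁] by simp, follow_append, hm,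
          Option.bind_some, follow_two, ha, Option.bind_some, hc]
      have hfts : follow X ((p ++ [x₁]) ++ [x]) o = some c := by
        rw [show ((p ++ [x₁]) ++ [x] : List X.S) = p ++ [x₁, x] by simp, follow_append, hm,
          Option.bind_some, follow_two, hb, Option.bind_some, hbc]
      have hAts : (p ++ [x₁]) ++ [x] ∈ Lang X o := mem_lang_iff.mpr ⟨c, hfts⟩
      have hfv : follow X (p ++ x₁ :: x :: q₂) o = follow X (p ++ x :: x₁ :: q₂) o := by
        rw [show (p ++ x₁ :: x :: q₂ : List X.S) = ((p ++ [x₁]) ++ [x]) ++ q₂ by simp,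
          show (p ++ x :: x₁ :: q₂ : List X.S) = ((p ++ [x]) ++ [x₁]) ++ q₂ by simp,
          follow_append ((p ++ [x₁]) ++ [x]) q₂, follow_append ((p ++ [x]) ++ [x₁]) q₂,
          hfst, hfts]
      have hv' : p ++ x₁ :: x :: q₂ ∈ Lang X o := lang_of_follow hv hfv
      have hq1 : σ p x₁ = t2 := by rw [ht2]; exact (hpar p hp x hps x₁ hptx hC).symm
      have hq2 : σ (p ++ [x₁]) x = t1 := by
        rw [ht1]; exact hpar p hp x₁ hptx x hps (comm_symm hC)
      have htail : sigmaFrom σ ((p ++ [x₁]) ++ [x]) q₂ = B := by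
        rw [hB3]
        exact congrFrom hend q₂ _ _ hAts hpsx (hfts.trans hfst.symm) (by
          rw [show (((p ++ [x₁]) ++ [x]) ++ q₂ : List X.S) = p ++ x₁ :: x :: q₂ by simp]
          exact hv')
      refine ⟨p ++ x₁ :: x :: q₂, hv', ⟨Or.inr (Or.inr ⟨p, q₂, x, x₁, hC, rfl, rfl⟩), hv, hv'⟩, ?_⟩
      rw [hy, sigmaW_split, sigmaFrom_two, hq1, hq2, htail]
      unfold sigmaW
      rw [← hA2]

theorem liftChain
    (hinj : ∀ v ∈ CC.Lang X o, Set.InjOn (σ v) (CC.EdgeAt X o v))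
    (hcomm : ∀ v ∈ CC.Lang X o, ∀ s ∈ CC.EdgeAt X o v, ∀ t ∈ CC.EdgeAt X o v,
      (X.Comm s t ↔ Y.Comm (σ v s) (σ v t)))
    (hpar : ∀ v ∈ CC.Lang X o, ∀ s ∈ CC.EdgeAt X o v, ∀ t ∈ CC.EdgeAt X o v,
      X.Comm s t → σ (v ++ [s]) t = σ v t)
    (hinv : ∀ v ∈ CC.Lang X o, ∀ s ∈ CC.EdgeAt X o v,
      σ (v ++ [s]) (X.inv s) = Y.inv (σ v s))
    (hend : ∀ v ∈ CC.Lang X o, ∀ w ∈ CC.Lang X o,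
      CC.follow X v o = CC.follow X w o → σ v = σ w)
    {y yd : List Y.S} (h : Red Y y yd) :
    ∀ v, v ∈ CC.Lang X o → sigmaW σ v = y →
      ∃ v', v' ∈ CC.Lang X o ∧ Relation.ReflTransGen (MoveL X o) v v' ∧ sigmaW σ v' = yd := by
  induction h using Relation.ReflTransGen.head_induction_on with
  | refl => exact fun v hv he => ⟨v, hv, Relation.ReflTransGen.refl, he⟩
  | head hstep _ ih =>
    intro v hv he
    obtain ⟨v₁, h1, h2, h3⟩ := liftStep hinj hcomm hpar hinv hend hv (he ▸ hstep)
    obtain ⟨v', h4, h5, h6⟩ := ih v₁ h1 h3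
    exact ⟨v', h4, Relation.ReflTransGen.head h2 h5, h6⟩

theorem moveL_symm {v w : List X.S} (h : MoveL X o v w) : MoveL X o w v := by
  obtain ⟨mv, h1, h2⟩ := h
  refine ⟨?_, h2, h1⟩
  rcases mv with h | h | h
  · exact Or.inr (Or.inl h)
  · exact Or.inl h
  · exact Or.inr (Or.inr (swap_symm h))

theorem rtg_moveL_symm {v w : List X.S} (h : Relation.ReflTransGen (MoveL X o) v w) :
    Relation.ReflTransGen (MoveL X o) w v := by
  induction h with
  | refl => exact Relation.ReflTransGen.refl
  | tail _ h2 ih => exact Relation.ReflTransGen.head (moveL_symm h2) ih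

end Final

/-- for a portrait satisfying comm, par, inv and end (tree is not
needed), a single cancellation-move on `v` corresponds to a single
cancellation-move on `σ(v)`, a single commutation-move corresponds to a single
commutation-move, and consequently `v, w ∈ L_o^{edge}` are related by finitely many
moves iff `σ(v)` and `σ(w)` are. -/
theorem stmt_11 (X Y : CC) (o : X.V) (σ : List X.S → X.S → Y.S)
    (hinj : ∀ v ∈ CC.Lang X o, Set.InjOn (σ v) (CC.EdgeAt X o v))
    (hcomm : ∀ v ∈ CC.Lang X o, ∀ s ∈ CC.EdgeAt X o v, ∀ t ∈ CC.EdgeAt X o v,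
      (X.Comm s t ↔ Y.Comm (σ v s) (σ v t)))
    (hpar : ∀ v ∈ CC.Lang X o, ∀ s ∈ CC.EdgeAt X o v, ∀ t ∈ CC.EdgeAt X o v,
      X.Comm s t → σ (v ++ [s]) t = σ v t)
    (hinv : ∀ v ∈ CC.Lang X o, ∀ s ∈ CC.EdgeAt X o v,
      σ (v ++ [s]) (X.inv s) = Y.inv (σ v s))
    (hend : ∀ v ∈ CC.Lang X o, ∀ w ∈ CC.Lang X o,
      CC.follow X v o = CC.follow X w o → σ v = σ w) :
    (∀ u1 u2 (s : X.S), u1 ++ s :: X.inv s :: u2 ∈ CC.Lang X o → u1 ++ u2 ∈ CC.Lang X o →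
      Cancel Y (sigmaW σ (u1 ++ s :: X.inv s :: u2)) (sigmaW σ (u1 ++ u2))) ∧
    (∀ u1 u2 (s t : X.S), X.Comm s t →
      u1 ++ s :: t :: u2 ∈ CC.Lang X o → u1 ++ t :: s :: u2 ∈ CC.Lang X o →
      Swap Y (sigmaW σ (u1 ++ s :: t :: u2)) (sigmaW σ (u1 ++ t :: s :: u2))) ∧
    (∀ v ∈ CC.Lang X o, ∀ w ∈ CC.Lang X o,
      (Relation.ReflTransGen (MoveL X o) v w ↔
        Relation.ReflTransGen (MoveFree Y) (sigmaW σ v) (sigmaW σ w))) := by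
  refine ⟨fun u1 u2 s hv _ => cancelMap hinv hend u1 u2 s hv,
    fun u1 u2 s t hC hv hw => swapMap hcomm hpar hend u1 u2 s t hC hv hw,
    fun v hv w hw => ⟨?_, ?_⟩⟩
  · -- forward
    intro h
    induction h with
    | refl => exact Relation.ReflTransGen.refl
    | tail _ h2 ih =>
      obtain ⟨mv, hv₁, hw₂⟩ := h2
      refine (ih hv₁).tail ?_
      rcases mv with ⟨u1, u2, s, e1, e2⟩ | ⟨u1, u2, s, e1, e2⟩ | ⟨u1, u2, s, t, hC, e1, e2⟩
      · refine Or.inl ?_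
        rw [e1, e2]
        exact cancelMap hinv hend u1 u2 s (e1 ▸ hv₁)
      · refine Or.inr (Or.inl ?_)
        rw [e1, e2]
        exact cancelMap hinv hend u1 u2 s (e1 ▸ hw₂)
      · refine Or.inr (Or.inr ?_)
        rw [e1, e2]
        exact swapMap hcomm hpar hend u1 u2 s t hC (e1 ▸ hv₁) (e2 ▸ hw₂)
  · -- backward
    intro h
    obtain ⟨d, h1, h2⟩ := join_of_moves h
    obtain ⟨v', hv', hcv, he1⟩ := liftChain hinj hcomm hpar hinv hend h1 v hv rfl
    obtain ⟨w', hw', hcw, he2⟩ := liftChain hinj hcomm hpar hinv hend h2 w hw rfl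
    have hnil : ([] : List X.S) ∈ CC.Lang X o := mem_lang_iff.mpr ⟨o, rfl⟩
    have hvw : v' = w' := sigma_inj hinj v' w' [] hnil (by simpa using hv') (by simpa using hw')
      (by
        show sigmaW σ v' = sigmaW σ w'
        rw [he1, he2])
    exact hcv.trans (rtg_moveL_symm (hvw ▸ hcw))
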